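/- The A^e-linear maps φ₀ and φ₁ defined by φ₀(ξ₀ ⊗_A x^i ξ₀) = Σ_{l=0}^{i−1} x^l ξ₁ x^{i−1−l}, φ₁(ξ₁ ⊗_A x^i ξ₀) = −δ_{i,p−1} ξ₂, and φ₁(ξ₀ ⊗_A x^i ξ₁) = δ_{i,p−1} ξ₂ satisfy the contracting-homotopy equation d_𝔸 ∘ φ + φ ∘ d_{𝔸⊗_A𝔸} = F in homological degrees 0 and 1 (with φ_{−1} = 0): explicitly, d₁∘φ₀ = F₀ on (𝔸⊗_A𝔸)₀ and d₂∘φ₁ + φ₀∘d_{(𝔸⊗_A𝔸)₁} = F₁ on (𝔸⊗_A𝔸)₁. -/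

import Mathlib

/-!
Setting: `k` a field of characteristic 0, `p > 2` an integer, `A = k[x]/(x^p)`,
`A^e = A ⊗ₖ A` (as `A` is commutative `A^op = A`), `u = x⊗1 - 1⊗x`,
`v = Σ_{i=0}^{p-1} x^i ⊗ x^{p-1-i}`, and `π : A^e → A` the multiplication map.
The complex `𝔸` has `𝔸ₙ = A^e` for `n ≥ 0`, with differential given by multiplication
by `u` in odd degrees and by `v` in even degrees, and augmentation `π`.
We write `ξₙ = 1 ⊗ 1` for the generator of `𝔸ₙ`, so that `x^i ξₙ x^j = x^i ⊗ x^j`.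
-/

open TensorProduct Polynomial

noncomputable section

variable (k : Type) [Field k] [CharZero k] (p : ℕ)

/-- `A = k[x]/(x^p)`. -/
abbrev Aq : Type := AdjoinRoot (X ^ p : k[X])

/-- `A^e = A ⊗ₖ A`. -/
abbrev Ae : Type := Aq k p ⊗[k] Aq k p

/-- The class of `x` in `A = k[x]/(x^p)`. -/
def xq : Aq k p := AdjoinRoot.root _

/-- `u = x ⊗ 1 - 1 ⊗ x ∈ A^e`. -/
def uE : Ae k p := xq k p ⊗ₜ 1 - 1 ⊗ₜ xq k p

/-- `v = Σ_{i=0}^{p-1} x^i ⊗ x^{p-1-i} ∈ A^e`. -/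
def vE : Ae k p := ∑ i ∈ Finset.range p, (xq k p ^ i) ⊗ₜ (xq k p ^ (p - 1 - i))

/-- The differential `dₙ : 𝔸ₙ → 𝔸ₙ₋₁` of the complex `𝔸`: multiplication by `u`
for `n` odd and by `v` for `n` even (`n ≥ 1`). -/
def dAn (n : ℕ) : Ae k p →ₗ[k] Ae k p :=
  LinearMap.mulLeft k (if n % 2 = 1 then uE k p else vE k p)

/-- The multiplication (augmentation) map `π : A^e → A`. -/
def piA : Ae k p →ₗ[k] Aq k p := LinearMap.mul' k (Aq k p)

/-!
The tensor square complex `𝔸 ⊗_A 𝔸`:  since `𝔸ᵢ ⊗_A 𝔸ⱼ ≅ A ⊗ₖ A ⊗ₖ A` (via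
`(a ⊗ b) ⊗_A (c ⊗ e) ↦ a ⊗ (b*c) ⊗ e`), we model the degree-`n` term
`(𝔸 ⊗_A 𝔸)ₙ = ⊕_{i+j=n} 𝔸ᵢ ⊗_A 𝔸ⱼ` as `Fin (n+1) → (A ⊗ₖ A) ⊗ₖ A`, the
component `i` corresponding to the summand `𝔸ᵢ ⊗_A 𝔸_{n-i}`.  Under this model
the left and right differentials become multiplication by the elements
`uL, vL, uR, vR` below, and the total differential `d(a ⊗_A b) = da ⊗_A b +
(-1)^{|a|} a ⊗_A db` is `dTot`.  The chain map `F = μ ⊗_A id - id ⊗_A μ`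
(where `μ` is `π` in degree 0 and `0` in positive degrees) becomes `FF`.
-/

/-- Model for `𝔸ᵢ ⊗_A 𝔸ⱼ`:  `(a⊗b) ⊗_A (c⊗e) ↦ (a ⊗ b*c) ⊗ e`. -/
abbrev TT : Type := Ae k p ⊗[k] Aq k p

/-- `u` acting through the left tensor factor: `x⊗1⊗1 - 1⊗x⊗1`. -/
def uL : TT k p := (uE k p) ⊗ₜ 1
/-- `v` acting through the left tensor factor. -/
def vL : TT k p := (vE k p) ⊗ₜ 1
/-- `u` acting through the right tensor factor: `1⊗x⊗1 - 1⊗1⊗x`. -/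
def uR : TT k p := ((1 : Aq k p) ⊗ₜ xq k p) ⊗ₜ 1 - ((1 : Aq k p) ⊗ₜ (1 : Aq k p)) ⊗ₜ xq k p
/-- `v` acting through the right tensor factor. -/
def vR : TT k p :=
  ∑ i ∈ Finset.range p, ((1 : Aq k p) ⊗ₜ (xq k p ^ i)) ⊗ₜ (xq k p ^ (p - 1 - i))

/-- Differential on the left tensor factor in degree `m`. -/
def eL (m : ℕ) : TT k p := if m % 2 = 1 then uL k p else vL k p
/-- Differential on the right tensor factor in degree `m`. -/
def eR (m : ℕ) : TT k p := if m % 2 = 1 then uR k p else vR k p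

/-- The total differential of the complex `𝔸 ⊗_A 𝔸`. -/
def dTot (n : ℕ) : (Fin (n + 1) → TT k p) →ₗ[k] (Fin n → TT k p) :=
  LinearMap.pi fun i => LinearMap.mulLeft k (eL k p (i + 1)) ∘ₗ LinearMap.proj i.succ
    + ((-1 : k) ^ (i : ℕ)) • (LinearMap.mulLeft k (eR k p (n - i)) ∘ₗ LinearMap.proj i.castSucc)

/-- `μ ⊗_A id` on the component `𝔸₀ ⊗_A 𝔸ₙ`:  `a ⊗ m ⊗ e ↦ (a*m) ⊗ e`. -/
def Lmap : TT k p →ₗ[k] Ae k p := (LinearMap.mul' k (Aq k p)).rTensor (Aq k p)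

/-- `id ⊗_A μ` on the component `𝔸ₙ ⊗_A 𝔸₀`:  `a ⊗ m ⊗ e ↦ a ⊗ (m*e)`. -/
def Rmap : TT k p →ₗ[k] Ae k p :=
  (LinearMap.mul' k (Aq k p)).lTensor (Aq k p) ∘ₗ
    (TensorProduct.assoc k (Aq k p) (Aq k p) (Aq k p)).toLinearMap

/-- The chain map `F = μ ⊗_A id - id ⊗_A μ : (𝔸 ⊗_A 𝔸)ₙ → 𝔸ₙ`. -/
def FF (n : ℕ) : (Fin (n + 1) → TT k p) →ₗ[k] Ae k p :=
  Lmap k p ∘ₗ LinearMap.proj 0 - Rmap k p ∘ₗ LinearMap.proj (Fin.last n)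

/-- The element `Σ_{a+b+c=p-2} x^a ξ ⊗_A x^b ξ x^c` appearing in the diagonal map. -/
def wElt : TT k p :=
  ∑ a ∈ Finset.range (p - 1), ∑ b ∈ Finset.range (p - 1 - a),
    ((xq k p ^ a) ⊗ₜ (xq k p ^ b)) ⊗ₜ (xq k p ^ (p - 2 - a - b))

/-- Component `i` of `Δₙ(ξₙ)`: it is `ξᵢ ⊗_A ξ_{n-i} = 1⊗1⊗1` except when `n` is even
and `i` is odd, where it is `Σ_{a+b+c=p-2} x^a ξᵢ ⊗_A x^b ξ_{n-i} x^c`. -/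
def dElt (n i : ℕ) : TT k p := if n % 2 = 0 ∧ i % 2 = 1 then wElt k p else 1


set_option maxHeartbeats 1000000 in
lemma xq_pow_p : xq k p ^ p = 0 := by
  rw [xq, ← AdjoinRoot.mk_X (f := (X ^ p : k[X])), ← map_pow, AdjoinRoot.mk_self]

lemma xq_pow_eq_zero {n : ℕ} (h : p ≤ n) : xq k p ^ n = 0 := by
  rw [← Nat.sub_add_cancel h, pow_add, xq_pow_p, mul_zero]

/-- basis of Aq -/
def Bq (hp : 0 < p) : Module.Basis (Fin p) k (Aq k p) :=
  ((AdjoinRoot.powerBasis' (g := (X ^ p : k[X])) (monic_X_pow p)).basis).reindex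
    (finCongr (by simp))

lemma Bq_apply (hp : 0 < p) (i : Fin p) : Bq k p hp i = xq k p ^ (i : ℕ) := by
  rw [Bq, Module.Basis.reindex_apply,
    (AdjoinRoot.powerBasis' (g := (X ^ p : k[X])) (monic_X_pow p)).basis_eq_pow]
  simp [AdjoinRoot.powerBasis'_gen, xq]

lemma TT_ext (hp : 0 < p) {M : Type} [AddCommGroup M] [Module k M]
    {f g : TT k p →ₗ[k] M}
    (h : ∀ a < p, ∀ i < p, ∀ b < p,
      f (((xq k p ^ a) ⊗ₜ (xq k p ^ i)) ⊗ₜ (xq k p ^ b)) =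
      g (((xq k p ^ a) ⊗ₜ (xq k p ^ i)) ⊗ₜ (xq k p ^ b))) : f = g := by
  apply Module.Basis.ext (((Bq k p hp).tensorProduct (Bq k p hp)).tensorProduct (Bq k p hp))
  rintro ⟨⟨a, i⟩, b⟩
  simpa [Module.Basis.tensorProduct_apply, Bq_apply] using h a a.2 i i.2 b b.2

lemma tmul_pow_congr {e1 e2 f1 f2 : ℕ} (h1 : e1 = f1) (h2 : e2 = f2) :
    (xq k p ^ e1) ⊗ₜ[k] (xq k p ^ e2) = (xq k p ^ f1) ⊗ₜ[k] (xq k p ^ f2) := by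
  rw [h1, h2]

lemma dAn1_apply (z : Ae k p) : dAn k p 1 z = uE k p * z := by simp [dAn]

lemma dAn2_apply (z : Ae k p) : dAn k p 2 z = vE k p * z := by simp [dAn]

lemma FF_apply (n : ℕ) (f : Fin (n + 1) → TT k p) :
    FF k p n f = Lmap k p (f 0) - Rmap k p (f (Fin.last n)) := rfl

lemma Lmap_apply (a i b : ℕ) :
    Lmap k p (((xq k p ^ a) ⊗ₜ (xq k p ^ i)) ⊗ₜ (xq k p ^ b)) =
      (xq k p ^ (a + i)) ⊗ₜ (xq k p ^ b) := by
  simp [Lmap, LinearMap.rTensor_tmul, LinearMap.mul'_apply, ← pow_add]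

lemma Rmap_apply (a i b : ℕ) :
    Rmap k p (((xq k p ^ a) ⊗ₜ (xq k p ^ i)) ⊗ₜ (xq k p ^ b)) =
      (xq k p ^ a) ⊗ₜ (xq k p ^ (i + b)) := by
  simp [Rmap, TensorProduct.assoc_tmul, LinearMap.lTensor_tmul, LinearMap.mul'_apply, ← pow_add]

lemma uE_mul (c d : ℕ) :
    uE k p * ((xq k p ^ c) ⊗ₜ (xq k p ^ d)) =
      (xq k p ^ (c + 1)) ⊗ₜ (xq k p ^ d) - (xq k p ^ c) ⊗ₜ (xq k p ^ (d + 1)) := by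
  simp [uE, sub_mul, Algebra.TensorProduct.tmul_mul_tmul, ← pow_succ']

lemma vE_mul (c d : ℕ) :
    vE k p * ((xq k p ^ c) ⊗ₜ (xq k p ^ d)) =
      ∑ j ∈ Finset.range p, (xq k p ^ (c + j)) ⊗ₜ[k] (xq k p ^ (d + (p - 1 - j))) := by
  rw [vE, Finset.sum_mul]
  refine Finset.sum_congr rfl fun j hj => ?_
  rw [Algebra.TensorProduct.tmul_mul_tmul, ← pow_add, ← pow_add, add_comm j c,
    add_comm (p - 1 - j) d]

lemma uL_mul (a i b : ℕ) :
    uL k p * (((xq k p ^ a) ⊗ₜ (xq k p ^ i)) ⊗ₜ (xq k p ^ b)) =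
      ((xq k p ^ (a + 1)) ⊗ₜ (xq k p ^ i)) ⊗ₜ (xq k p ^ b)
        - ((xq k p ^ a) ⊗ₜ (xq k p ^ (i + 1))) ⊗ₜ (xq k p ^ b) := by
  simp [uL, uE, sub_tmul, sub_mul, Algebra.TensorProduct.tmul_mul_tmul, ← pow_succ']

lemma uR_mul (a i b : ℕ) :
    uR k p * (((xq k p ^ a) ⊗ₜ (xq k p ^ i)) ⊗ₜ (xq k p ^ b)) =
      ((xq k p ^ a) ⊗ₜ (xq k p ^ (i + 1))) ⊗ₜ (xq k p ^ b)
        - ((xq k p ^ a) ⊗ₜ (xq k p ^ i)) ⊗ₜ (xq k p ^ (b + 1)) := by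
  simp [uR, sub_mul, Algebra.TensorProduct.tmul_mul_tmul, ← pow_succ']

lemma dTot1_apply (g : Fin 2 → TT k p) :
    dTot k p 1 g = Pi.single (0 : Fin 1) (uL k p * g 1 + uR k p * g 0) := by
  funext i
  fin_cases i
  simp [dTot, eL, eR, LinearMap.pi_apply]

set_option maxHeartbeats 2000000
set_option synthInstance.maxHeartbeats 400000

/-- The `A^e`-linear maps `φ₀, φ₁` defined by
`φ₀(ξ₀ ⊗_A x^i ξ₀) = Σ_{l=0}^{i-1} x^l ξ₁ x^{i-1-l}`,
`φ₁(ξ₁ ⊗_A x^i ξ₀) = -δ_{i,p-1} ξ₂`, `φ₁(ξ₀ ⊗_A x^i ξ₁) = δ_{i,p-1} ξ₂`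
satisfy the contracting homotopy equation `d_𝔸 ∘ φ + φ ∘ d_{𝔸⊗_A𝔸} = F` in degrees 0 and 1
(with `φ₋₁ = 0`):  `d₁ ∘ φ₀ = F₀` and `d₂ ∘ φ₁ + φ₀ ∘ d_{(𝔸⊗_A𝔸)₁} = F₁`.
(The maps `φ₀, φ₁` are recorded by their values on the basis elements
`x^a ξ ⊗_A x^i ξ x^b`, which encodes both the defining formulas and `A^e`-linearity;
in the model, the component of left degree 1 of `(𝔸⊗_A𝔸)₁` has index `1`.) -/
theorem phi_contracting_homotopy_for_F (hp : 2 < p)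
    (phi0 : (Fin 1 → TT k p) →ₗ[k] Ae k p) (phi1 : (Fin 2 → TT k p) →ₗ[k] Ae k p)
    (Hphi0 : ∀ a < p, ∀ i < p, ∀ b < p,
      phi0 (Pi.single 0 (((xq k p ^ a) ⊗ₜ (xq k p ^ i)) ⊗ₜ (xq k p ^ b))) =
        ∑ l ∈ Finset.range i, (xq k p ^ (a + l)) ⊗ₜ (xq k p ^ (b + (i - 1 - l))))
    (Hphi1L : ∀ a < p, ∀ i < p, ∀ b < p,
      phi1 (Pi.single 1 (((xq k p ^ a) ⊗ₜ (xq k p ^ i)) ⊗ₜ (xq k p ^ b))) =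
        if i = p - 1 then -((xq k p ^ a) ⊗ₜ (xq k p ^ b)) else 0)
    (Hphi1R : ∀ a < p, ∀ i < p, ∀ b < p,
      phi1 (Pi.single 0 (((xq k p ^ a) ⊗ₜ (xq k p ^ i)) ⊗ₜ (xq k p ^ b))) =
        if i = p - 1 then (xq k p ^ a) ⊗ₜ (xq k p ^ b) else 0) :
    dAn k p 1 ∘ₗ phi0 = FF k p 0 ∧
    dAn k p 2 ∘ₗ phi1 + phi0 ∘ₗ dTot k p 1 = FF k p 1 := by
  classical
  have hp0 : 0 < p := by omega
  have hxp : xq k p ^ p = 0 := xq_pow_p k p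
  -- extended versions of the hypotheses, valid for all `a, b`
  have key0 : ∀ (a : ℕ), ∀ i < p, ∀ (b : ℕ),
      phi0 (Pi.single 0 (((xq k p ^ a) ⊗ₜ (xq k p ^ i)) ⊗ₜ (xq k p ^ b))) =
        ∑ l ∈ Finset.range i, (xq k p ^ (a + l)) ⊗ₜ[k] (xq k p ^ (b + (i - 1 - l))) := by
    intro a i hi b
    by_cases ha : a < p
    · by_cases hb : b < p
      · exact Hphi0 a ha i hi b hb
      · have hb' : xq k p ^ b = 0 := xq_pow_eq_zero k p (le_of_not_gt hb)
        rw [hb', tmul_zero, Pi.single_zero, map_zero]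
        refine (Finset.sum_eq_zero fun l hl => ?_).symm
        rw [xq_pow_eq_zero k p (show p ≤ b + (i - 1 - l) by omega), tmul_zero]
    · have ha' : xq k p ^ a = 0 := xq_pow_eq_zero k p (le_of_not_gt ha)
      rw [ha', zero_tmul, zero_tmul, Pi.single_zero, map_zero]
      refine (Finset.sum_eq_zero fun l hl => ?_).symm
      rw [xq_pow_eq_zero k p (show p ≤ a + l by omega), zero_tmul]
  have key1L : ∀ (a : ℕ), ∀ i < p, ∀ (b : ℕ),
      phi1 (Pi.single 1 (((xq k p ^ a) ⊗ₜ (xq k p ^ i)) ⊗ₜ (xq k p ^ b))) =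
        if i = p - 1 then -((xq k p ^ a) ⊗ₜ[k] (xq k p ^ b)) else 0 := by
    intro a i hi b
    by_cases ha : a < p
    · by_cases hb : b < p
      · exact Hphi1L a ha i hi b hb
      · have hb' : xq k p ^ b = 0 := xq_pow_eq_zero k p (le_of_not_gt hb)
        rw [hb', tmul_zero, tmul_zero, Pi.single_zero, map_zero]
        split <;> simp
    · have ha' : xq k p ^ a = 0 := xq_pow_eq_zero k p (le_of_not_gt ha)
      rw [ha', zero_tmul, zero_tmul, Pi.single_zero, map_zero]
      split <;> simp
  have key1R : ∀ (a : ℕ), ∀ i < p, ∀ (b : ℕ),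
      phi1 (Pi.single 0 (((xq k p ^ a) ⊗ₜ (xq k p ^ i)) ⊗ₜ (xq k p ^ b))) =
        if i = p - 1 then ((xq k p ^ a) ⊗ₜ[k] (xq k p ^ b)) else 0 := by
    intro a i hi b
    by_cases ha : a < p
    · by_cases hb : b < p
      · exact Hphi1R a ha i hi b hb
      · have hb' : xq k p ^ b = 0 := xq_pow_eq_zero k p (le_of_not_gt hb)
        rw [hb', tmul_zero, tmul_zero, Pi.single_zero, map_zero]
        split <;> simp
    · have ha' : xq k p ^ a = 0 := xq_pow_eq_zero k p (le_of_not_gt ha)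
      rw [ha', zero_tmul, zero_tmul, Pi.single_zero, map_zero]
      split <;> simp
  constructor
  · -- degree 0
    apply LinearMap.pi_ext'
    intro j
    fin_cases j
    apply TT_ext k p hp0
    intro a ha i hi b hb
    simp only [LinearMap.comp_apply, LinearMap.coe_single, Fin.zero_eta, Fin.isValue]
    rw [Hphi0 a ha i hi b hb, dAn1_apply, Finset.mul_sum, FF_apply]
    have hlast : (Fin.last 0) = (0 : Fin 1) := rfl
    rw [hlast, Pi.single_eq_same, Lmap_apply, Rmap_apply]
    have step : ∑ l ∈ Finset.range i,
        uE k p * ((xq k p ^ (a + l)) ⊗ₜ[k] (xq k p ^ (b + (i - 1 - l)))) =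
        (fun l => (xq k p ^ (a + l)) ⊗ₜ[k] (xq k p ^ (b + (i - l)))) i
          - (fun l => (xq k p ^ (a + l)) ⊗ₜ[k] (xq k p ^ (b + (i - l)))) 0 := by
      rw [← Finset.sum_range_sub (fun l => (xq k p ^ (a + l)) ⊗ₜ[k] (xq k p ^ (b + (i - l)))) i]
      refine Finset.sum_congr rfl fun l hl => ?_
      have hl' := Finset.mem_range.mp hl
      rw [uE_mul]
      congr 1 <;> exact tmul_pow_congr k p (by omega) (by omega)
    rw [step]
    congr 1 <;> exact tmul_pow_congr k p (by omega) (by omega)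
  · -- degree 1
    apply LinearMap.pi_ext'
    intro j
    fin_cases j
    · -- component 0 : the summand 𝔸₀ ⊗ 𝔸₁
      apply TT_ext k p hp0
      intro a ha i hi b hb
      simp only [LinearMap.add_apply, LinearMap.comp_apply, LinearMap.coe_single,
        Fin.zero_eta, Fin.isValue]
      rw [dTot1_apply, FF_apply]
      have h1 : (Pi.single (M := fun _ : Fin 2 => TT k p) 0 ((((xq k p ^ a) ⊗ₜ[k] (xq k p ^ i)) ⊗ₜ[k] (xq k p ^ b)) : TT k p)) 1 = 0 :=
        Pi.single_eq_of_ne (by decide) _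
      have h0 : (Pi.single (M := fun _ : Fin 2 => TT k p) 0 ((((xq k p ^ a) ⊗ₜ[k] (xq k p ^ i)) ⊗ₜ[k] (xq k p ^ b)) : TT k p)) 0 =
          ((xq k p ^ a) ⊗ₜ (xq k p ^ i)) ⊗ₜ (xq k p ^ b) := Pi.single_eq_same _ _
      have hL : (Pi.single (M := fun _ : Fin 2 => TT k p) 0 ((((xq k p ^ a) ⊗ₜ[k] (xq k p ^ i)) ⊗ₜ[k] (xq k p ^ b)) : TT k p))
          (Fin.last 1) = 0 := Pi.single_eq_of_ne (by decide) _
      rw [h1, h0, hL, mul_zero, zero_add, map_zero, sub_zero, Lmap_apply,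
        key1R a i hi b, uR_mul, Pi.single_sub, map_sub]
      by_cases hip : i = p - 1
      · subst hip
        rw [if_pos rfl, dAn2_apply, vE_mul,
          show p - 1 + 1 = p by omega, hxp, tmul_zero, zero_tmul, Pi.single_zero,
          map_zero, zero_sub, key0 a (p - 1) (by omega) (b + 1)]
        rw [show Finset.range p = Finset.range ((p - 1) + 1) by congr 1; omega,
          Finset.sum_range_succ]
        have hc : ∀ l ∈ Finset.range (p - 1),
            (xq k p ^ (a + l)) ⊗ₜ[k] (xq k p ^ ((b + 1) + (p - 1 - 1 - l))) =
            (xq k p ^ (a + l)) ⊗ₜ[k] (xq k p ^ (b + (p - 1 - l))) := fun l hl =>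
          tmul_pow_congr k p rfl (by have := Finset.mem_range.mp hl; omega)
        rw [Finset.sum_congr rfl hc]
        have hc2 : (xq k p ^ (a + (p - 1))) ⊗ₜ[k] (xq k p ^ (b + (p - 1 - (p - 1)))) =
            (xq k p ^ (a + (p - 1))) ⊗ₜ[k] (xq k p ^ b) :=
          tmul_pow_congr k p rfl (by omega)
        rw [hc2]
        abel
      · rw [if_neg hip, map_zero, zero_add,
          key0 a (i + 1) (by omega) b, key0 a i hi (b + 1), Finset.sum_range_succ]
        have hc : ∀ l ∈ Finset.range i,
            (xq k p ^ (a + l)) ⊗ₜ[k] (xq k p ^ ((b + 1) + (i - 1 - l))) =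
            (xq k p ^ (a + l)) ⊗ₜ[k] (xq k p ^ (b + (i + 1 - 1 - l))) := fun l hl =>
          tmul_pow_congr k p rfl (by have := Finset.mem_range.mp hl; omega)
        rw [Finset.sum_congr rfl hc]
        have hc2 : (xq k p ^ (a + i)) ⊗ₜ[k] (xq k p ^ (b + (i + 1 - 1 - i))) =
            (xq k p ^ (a + i)) ⊗ₜ[k] (xq k p ^ b) := tmul_pow_congr k p rfl (by omega)
        rw [hc2]
        abel
    · -- component 1 : the summand 𝔸₁ ⊗ 𝔸₀
      apply TT_ext k p hp0
      intro a ha i hi b hb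
      simp only [LinearMap.add_apply, LinearMap.comp_apply, LinearMap.coe_single,
        Fin.mk_one, Fin.isValue]
      rw [dTot1_apply, FF_apply]
      have h1 : (Pi.single (M := fun _ : Fin 2 => TT k p) 1 ((((xq k p ^ a) ⊗ₜ[k] (xq k p ^ i)) ⊗ₜ[k] (xq k p ^ b)) : TT k p)) 1 =
          ((xq k p ^ a) ⊗ₜ (xq k p ^ i)) ⊗ₜ (xq k p ^ b) := Pi.single_eq_same _ _
      have h0 : (Pi.single (M := fun _ : Fin 2 => TT k p) 1 ((((xq k p ^ a) ⊗ₜ[k] (xq k p ^ i)) ⊗ₜ[k] (xq k p ^ b)) : TT k p)) 0 = 0 :=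
        Pi.single_eq_of_ne (by decide) _
      have hL : (Pi.single (M := fun _ : Fin 2 => TT k p) 1 ((((xq k p ^ a) ⊗ₜ[k] (xq k p ^ i)) ⊗ₜ[k] (xq k p ^ b)) : TT k p))
          (Fin.last 1) = ((xq k p ^ a) ⊗ₜ (xq k p ^ i)) ⊗ₜ (xq k p ^ b) :=
        Pi.single_eq_same _ _
      rw [h1, h0, hL, mul_zero, add_zero, map_zero, zero_sub, Rmap_apply,
        key1L a i hi b, uL_mul, Pi.single_sub, map_sub]
      by_cases hip : i = p - 1
      · subst hip
        rw [if_pos rfl, map_neg, dAn2_apply, vE_mul,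
          show p - 1 + 1 = p by omega, hxp, tmul_zero, zero_tmul, Pi.single_zero,
          map_zero, sub_zero, key0 (a + 1) (p - 1) (by omega) b]
        rw [show Finset.range p = Finset.range ((p - 1) + 1) by congr 1; omega,
          Finset.sum_range_succ']
        have hc : ∀ l ∈ Finset.range (p - 1),
            (xq k p ^ ((a + 1) + l)) ⊗ₜ[k] (xq k p ^ (b + (p - 1 - 1 - l))) =
            (xq k p ^ (a + (l + 1))) ⊗ₜ[k] (xq k p ^ (b + (p - 1 - (l + 1)))) := fun l hl =>
          tmul_pow_congr k p (by omega) (by omega)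
        rw [Finset.sum_congr rfl hc]
        have hc2 : (xq k p ^ a) ⊗ₜ[k] (xq k p ^ (p - 1 + b)) =
            (xq k p ^ (a + 0)) ⊗ₜ[k] (xq k p ^ (b + (p - 1 - 0))) :=
          tmul_pow_congr k p (by omega) (by omega)
        rw [hc2]
        abel
      · rw [if_neg hip, map_zero, zero_add,
          key0 (a + 1) i hi b, key0 a (i + 1) (by omega) b, Finset.sum_range_succ']
        have hc : ∀ l ∈ Finset.range i,
            (xq k p ^ ((a + 1) + l)) ⊗ₜ[k] (xq k p ^ (b + (i - 1 - l))) =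
            (xq k p ^ (a + (l + 1))) ⊗ₜ[k] (xq k p ^ (b + (i + 1 - 1 - (l + 1)))) := fun l hl =>
          tmul_pow_congr k p (by omega) (by omega)
        rw [Finset.sum_congr rfl hc]
        have hc2 : (xq k p ^ a) ⊗ₜ[k] (xq k p ^ (i + b)) =
            (xq k p ^ (a + 0)) ⊗ₜ[k] (xq k p ^ (b + (i + 1 - 1 - 0))) :=
          tmul_pow_congr k p (by omega) (by omega)
        rw [hc2]
        abel
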